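/- Let r ∈ (1, ∞), let 0 ≤ L < 1, and let f : 𝒜 → 𝒜 be a mapping with f(0) = 0 for which there exists a function φ : 𝒜 × 𝒜 × 𝒜 → [0, ∞) such that ‖r μ f((a+b)/r) + r μ f((a−b)/r) − 2 f(μ a) + f(c c* c) − f(c) c* c − c (f(c))* c − c c* f(c)‖ ≤ φ(a, b, c) for all μ ∈ 𝕋 and all a, b, c ∈ 𝒜, and φ(a, b, c) ≤ r L φ(a/r, b/r, c/r) for all a, b, c ∈ 𝒜. Then there exists a unique J*-derivation D : 𝒜 → 𝒜 such that ‖f(a) − D(a)‖ ≤ (L/(1 − L)) φ(a, 0, 0) for all a ∈ 𝒜. -/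

import Mathlib

open ContinuousLinearMap Filter
open Topology

variable {H K : Type*} [NormedAddCommGroup H] [InnerProductSpace ℂ H] [CompleteSpace H]
  [NormedAddCommGroup K] [InnerProductSpace ℂ K] [CompleteSpace K]

/-- `𝒜` is closed under the `J*`-triple product `x ↦ x x* x`. -/
def JStarClosed (𝒜 : Submodule ℂ (H →L[ℂ] K)) : Prop :=
  ∀ x : H →L[ℂ] K, x ∈ 𝒜 → (x ∘L adjoint x) ∘L x ∈ 𝒜

/-- The triple product `c c* c` as an element of `𝒜`. -/
noncomputable def cube (𝒜 : Submodule ℂ (H →L[ℂ] K)) (hA : JStarClosed 𝒜) (c : 𝒜) : 𝒜 :=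
  ⟨((c : H →L[ℂ] K) ∘L adjoint (c : H →L[ℂ] K)) ∘L (c : H →L[ℂ] K), hA c c.2⟩

/-- `D : 𝒜 → 𝒜` is a `J*`-derivation: it is `ℂ`-linear and satisfies
`D(c c* c) = D(c) c* c + c (D(c))* c + c c* D(c)`. -/
noncomputable def IsJStarDerivation (𝒜 : Submodule ℂ (H →L[ℂ] K)) (hA : JStarClosed 𝒜)
    (D : 𝒜 → 𝒜) : Prop :=
  (∀ a b : 𝒜, D (a + b) = D a + D b) ∧
  (∀ (z : ℂ) (a : 𝒜), D (z • a) = z • D a) ∧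
  (∀ c : 𝒜, (D (cube 𝒜 hA c) : H →L[ℂ] K) =
      ((D c : H →L[ℂ] K) ∘L adjoint (c : H →L[ℂ] K)) ∘L (c : H →L[ℂ] K) +
      ((c : H →L[ℂ] K) ∘L adjoint (D c : H →L[ℂ] K)) ∘L (c : H →L[ℂ] K) +
      ((c : H →L[ℂ] K) ∘L adjoint (c : H →L[ℂ] K)) ∘L (D c : H →L[ℂ] K))

/-- The defect of the generalized Jensen functional equation combined with the
`J*`-derivation identity, for a map `f : 𝒜 → 𝒜`, parameter `r` and scalar `μ`. -/
noncomputable def jensenDefect (𝒜 : Submodule ℂ (H →L[ℂ] K)) (hA : JStarClosed 𝒜)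
    (r : ℝ) (f : 𝒜 → 𝒜) (μ : ℂ) (a b c : 𝒜) : H →L[ℂ] K :=
  ((r : ℂ) * μ) • (f ((r : ℂ)⁻¹ • (a + b)) : H →L[ℂ] K) +
  ((r : ℂ) * μ) • (f ((r : ℂ)⁻¹ • (a - b)) : H →L[ℂ] K) -
  (2 : ℂ) • (f (μ • a) : H →L[ℂ] K) +
  (f (cube 𝒜 hA c) : H →L[ℂ] K) -
  ((f c : H →L[ℂ] K) ∘L adjoint (c : H →L[ℂ] K)) ∘L (c : H →L[ℂ] K) -
  ((c : H →L[ℂ] K) ∘L adjoint (f c : H →L[ℂ] K)) ∘L (c : H →L[ℂ] K) -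
  ((c : H →L[ℂ] K) ∘L adjoint (c : H →L[ℂ] K)) ∘L (f c : H →L[ℂ] K)

set_option maxHeartbeats 4000000 in
/-- Theorem 3.2 (stability of `J*`-derivations via the fixed point alternative):
if `f(0) = 0`, the Jensen/`J*` defect of `f` is controlled by `φ`, and
`φ(a,b,c) ≤ rL φ(a/r, b/r, c/r)` for some `L < 1`, then there is a unique
`J*`-derivation `D` with `‖f(a) − D(a)‖ ≤ (L/(1 − L)) φ(a,0,0)`. -/
theorem stability_JStarDerivation_fixedPoint
    (𝒜 : Submodule ℂ (H →L[ℂ] K)) (hclosed : IsClosed (𝒜 : Set (H →L[ℂ] K)))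
    (hA : JStarClosed 𝒜)
    (r : ℝ) (hr : 1 < r) (L : ℝ) (hL0 : 0 ≤ L) (hL1 : L < 1)
    (f : 𝒜 → 𝒜) (hf0 : f 0 = 0)
    (φ : 𝒜 → 𝒜 → 𝒜 → ℝ) (hφ0 : ∀ a b c : 𝒜, 0 ≤ φ a b c)
    (hineq : ∀ (μ : ℂ), ‖μ‖ = 1 → ∀ a b c : 𝒜, ‖jensenDefect 𝒜 hA r f μ a b c‖ ≤ φ a b c)
    (hφ : ∀ a b c : 𝒜,
      φ a b c ≤ r * L * φ ((r : ℂ)⁻¹ • a) ((r : ℂ)⁻¹ • b) ((r : ℂ)⁻¹ • c)) :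
    ∃! D : 𝒜 → 𝒜,
      IsJStarDerivation 𝒜 hA D ∧
      ∀ a : 𝒜, ‖f a - D a‖ ≤ L / (1 - L) * φ a 0 0 := by
  haveI : CompleteSpace 𝒜 := hclosed.completeSpace_coe
  have hr0 : (0:ℝ) < r := one_pos.trans hr
  have hR0 : (r:ℂ) ≠ 0 := by exact_mod_cast hr0.ne'
  have hRn0 : ∀ n : ℕ, ((r:ℂ))^n ≠ 0 := fun n => pow_ne_zero n hR0
  have hnormR : ‖(r:ℂ)‖ = r := by
    rw [Complex.norm_real]; exact abs_of_pos hr0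
  have hL1' : (0:ℝ) < 1 - L := by linarith
  have htwo : (2:ℂ) ≠ 0 := two_ne_zero
  have hns : ∀ (z : ℂ) (x : H →L[ℂ] K), ‖z • x‖ = ‖z‖ * ‖x‖ := fun z x => norm_smul z x
  have hnsA : ∀ (z : ℂ) (x : 𝒜), ‖z • x‖ = ‖z‖ * ‖x‖ := fun z x => by
    rw [← Submodule.norm_coe, Submodule.coe_smul, norm_smul, Submodule.norm_coe]
  -- adjoint commutes with real scalars
  have hadj_smul : ∀ (z : ℂ) (x : H →L[ℂ] K),
      adjoint (z • x) = (starRingEnd ℂ z) • adjoint x := fun z x =>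
    LinearIsometryEquiv.map_smulₛₗ adjoint z x
  have hconj_pow : ∀ n : ℕ, (starRingEnd ℂ) ((r:ℂ)^n) = (r:ℂ)^n := by
    intro n; rw [map_pow, Complex.conj_ofReal]
  have hconj_pow_inv : ∀ n : ℕ, (starRingEnd ℂ) (((r:ℂ)^n)⁻¹) = ((r:ℂ)^n)⁻¹ := by
    intro n; rw [map_inv₀, hconj_pow]
  have cube0 : cube 𝒜 hA (0:𝒜) = 0 := by
    apply Subtype.ext; simp [cube]
  have cube_smul : ∀ (n : ℕ) (c : 𝒜),
      cube 𝒜 hA ((r:ℂ)^n • c) = ((r:ℂ)^(3*n)) • cube 𝒜 hA c := by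
    intro n c
    apply Subtype.ext
    simp only [cube, SetLike.val_smul]
    rw [hadj_smul, hconj_pow]
    simp only [smul_comp, comp_smul, smul_smul]
    congr 1
    ring
  -- the approximating sequence
  set g : ℕ → 𝒜 → 𝒜 := fun n a => ((r:ℂ)^n)⁻¹ • f ((r:ℂ)^n • a) with hgdef
  have hg0 : ∀ a, g 0 a = f a := by intro a; simp [hgdef]
  have hgzero : ∀ n, g n 0 = 0 := by intro n; simp [hgdef, hf0]
  -- iterated φ bound
  have hφn : ∀ (n : ℕ) (a b c : 𝒜),
      φ ((r:ℂ)^n • a) ((r:ℂ)^n • b) ((r:ℂ)^n • c) ≤ (r*L)^n * φ a b c := by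
    intro n
    induction n with
    | zero => intro a b c; simp
    | succ n ih =>
      intro a b c
      have harg : ∀ x : 𝒜, (r:ℂ)⁻¹ • ((r:ℂ)^(n+1) • x) = (r:ℂ)^n • x := by
        intro x; rw [smul_smul]; congr 1; field_simp; ring
      have h1 := hφ ((r:ℂ)^(n+1) • a) ((r:ℂ)^(n+1) • b) ((r:ℂ)^(n+1) • c)
      rw [harg a, harg b, harg c] at h1
      calc φ ((r:ℂ)^(n+1) • a) ((r:ℂ)^(n+1) • b) ((r:ℂ)^(n+1) • c)
          ≤ r*L * φ ((r:ℂ)^n • a) ((r:ℂ)^n • b) ((r:ℂ)^n • c) := h1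
        _ ≤ r*L * ((r*L)^n * φ a b c) :=
            mul_le_mul_of_nonneg_left (ih a b c) (mul_nonneg hr0.le hL0)
        _ = (r*L)^(n+1) * φ a b c := by ring
  -- one-step estimate
  have hstep : ∀ a : 𝒜, ‖(f a : H →L[ℂ] K) - (r:ℂ)⁻¹ • (f ((r:ℂ) • a) : H →L[ℂ] K)‖
      ≤ L/2 * φ a 0 0 := by
    intro a
    have h := hineq 1 (by simp) ((r:ℂ) • a) 0 0
    have hdef : jensenDefect 𝒜 hA r f 1 ((r:ℂ) • a) 0 0
        = (2:ℂ) • ((r:ℂ) • (f a : H →L[ℂ] K) - (f ((r:ℂ) • a) : H →L[ℂ] K)) := by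
      simp only [jensenDefect, add_zero, sub_zero, mul_one, one_smul, cube0, hf0,
        inv_smul_smul₀ hR0, ZeroMemClass.coe_zero, comp_zero, zero_comp, map_zero]
      module
    rw [hdef] at h
    have hφ1 : φ ((r:ℂ) • a) 0 0 ≤ r * L * φ a 0 0 := by
      have := hφn 1 a 0 0
      simpa using this
    have hnorm2 : ‖(r:ℂ) • (f a : H →L[ℂ] K) - (f ((r:ℂ) • a) : H →L[ℂ] K)‖
        ≤ (r * L * φ a 0 0) / 2 := by
      rw [hns] at h
      have h2 : ‖(2:ℂ)‖ = 2 := by norm_num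
      rw [h2] at h
      linarith
    have heq : (f a : H →L[ℂ] K) - (r:ℂ)⁻¹ • (f ((r:ℂ) • a) : H →L[ℂ] K)
        = (r:ℂ)⁻¹ • ((r:ℂ) • (f a : H →L[ℂ] K) - (f ((r:ℂ) • a) : H →L[ℂ] K)) := by
      rw [smul_sub, smul_smul, inv_mul_cancel₀ hR0, one_smul]
    rw [heq, hns, norm_inv, hnormR]
    calc r⁻¹ * ‖(r:ℂ) • (f a : H →L[ℂ] K) - (f ((r:ℂ) • a) : H →L[ℂ] K)‖
        ≤ r⁻¹ * ((r * L * φ a 0 0) / 2) :=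
          mul_le_mul_of_nonneg_left hnorm2 (by positivity)
      _ = r⁻¹ * (r * (L/2 * φ a 0 0)) := by ring
      _ = L/2 * φ a 0 0 := inv_mul_cancel_left₀ hr0.ne' _
  -- geometric bound on successive differences
  have hgdist : ∀ a : 𝒜, ∀ n : ℕ,
      dist (g n a) (g (n+1) a) ≤ (L/2 * φ a 0 0) * L^n := by
    intro a n
    erw [dist_eq_norm, Submodule.coe_norm]
    have hcoe : ((g n a - g (n+1) a : 𝒜) : H →L[ℂ] K)
        = ((r:ℂ)^n)⁻¹ • ((f ((r:ℂ)^n • a) : H →L[ℂ] K)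
            - (r:ℂ)⁻¹ • (f ((r:ℂ) • ((r:ℂ)^n • a)) : H →L[ℂ] K)) := by
      have harg : (r:ℂ)^(n+1) • a = (r:ℂ) • ((r:ℂ)^n • a) := by
        rw [smul_smul]; congr 1; ring
      push_cast [hgdef, harg]
      match_scalars
      · field_simp
      · field_simp
        ring
    rw [hcoe, hns, norm_inv, norm_pow, hnormR]
    have h1 := hstep ((r:ℂ)^n • a)
    have h2 : φ ((r:ℂ)^n • a) 0 0 ≤ (r*L)^n * φ a 0 0 := by
      have := hφn n a 0 0; simpa using this
    have hrn : (0:ℝ) < r^n := pow_pos hr0 n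
    calc (r^n)⁻¹ * ‖(f ((r:ℂ)^n • a) : H →L[ℂ] K)
            - (r:ℂ)⁻¹ • (f ((r:ℂ) • ((r:ℂ)^n • a)) : H →L[ℂ] K)‖
        ≤ (r^n)⁻¹ * (L/2 * φ ((r:ℂ)^n • a) 0 0) :=
          mul_le_mul_of_nonneg_left h1 (by positivity)
      _ ≤ (r^n)⁻¹ * (L/2 * ((r*L)^n * φ a 0 0)) := by
          apply mul_le_mul_of_nonneg_left _ (by positivity)
          exact mul_le_mul_of_nonneg_left h2 (by positivity)
      _ = (L/2 * φ a 0 0) * L^n := by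
          rw [mul_pow]; field_simp
  -- construction of D
  have hcauchy : ∀ a : 𝒜, CauchySeq (fun n => g n a) := fun a =>
    cauchySeq_of_le_geometric L _ hL1 (hgdist a)
  have hex : ∀ a : 𝒜, ∃ l : 𝒜, Tendsto (fun n => g n a) atTop (𝓝 l) := fun a =>
    cauchySeq_tendsto_of_complete (hcauchy a)
  choose D hD using hex
  have hbound : ∀ a : 𝒜, ‖f a - D a‖ ≤ L / (1 - L) * φ a 0 0 := by
    intro a
    have h := dist_le_of_le_geometric_of_tendsto₀ L _ hL1 (hgdist a) (hD a)
    rw [hg0 a, dist_eq_norm] at h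
    have he : (L/2 * φ a 0 0) / (1 - L) = L / (1-L) * (φ a 0 0 / 2) := by ring
    rw [he] at h
    refine h.trans ?_
    have h1 : φ a 0 0 / 2 ≤ φ a 0 0 := by linarith [hφ0 a 0 0]
    exact mul_le_mul_of_nonneg_left h1 (div_nonneg hL0 hL1'.le)
  have hDcoe : ∀ a : 𝒜, Tendsto (fun n => ((g n a : 𝒜) : H →L[ℂ] K)) atTop
      (𝓝 ((D a : 𝒜) : H →L[ℂ] K)) := fun a =>
    (continuous_subtype_val.tendsto _).comp (hD a)
  have hD0 : D 0 = 0 := by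
    refine tendsto_nhds_unique (hD 0) ?_
    simpa [hgzero] using (tendsto_const_nhds : Tendsto (fun _ : ℕ => (0:𝒜)) atTop (𝓝 0))
  -- limiting Jensen equation
  have hP3 : ∀ μ : ℂ, ‖μ‖ = 1 → ∀ a b : 𝒜,
      ((r:ℂ)*μ) • D ((r:ℂ)⁻¹ • (a+b)) + ((r:ℂ)*μ) • D ((r:ℂ)⁻¹ • (a-b))
        - (2:ℂ) • D (μ • a) = 0 := by
    intro μ hμ a b
    have key : ∀ n : ℕ, ‖((r:ℂ)*μ) • g n ((r:ℂ)⁻¹ • (a+b)) + ((r:ℂ)*μ) • g n ((r:ℂ)⁻¹ • (a-b))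
        - (2:ℂ) • g n (μ • a)‖ ≤ φ a b 0 * L^n := by
      intro n
      have h := hineq μ hμ ((r:ℂ)^n • a) ((r:ℂ)^n • b) 0
      have e1 : (r:ℂ)⁻¹ • ((r:ℂ)^n • a + (r:ℂ)^n • b) = (r:ℂ)^n • ((r:ℂ)⁻¹ • (a+b)) := by
        module
      have e2 : (r:ℂ)⁻¹ • ((r:ℂ)^n • a - (r:ℂ)^n • b) = (r:ℂ)^n • ((r:ℂ)⁻¹ • (a-b)) := by
        module
      have e3 : μ • ((r:ℂ)^n • a) = (r:ℂ)^n • (μ • a) := smul_comm μ _ a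
      have hdef : jensenDefect 𝒜 hA r f μ ((r:ℂ)^n • a) ((r:ℂ)^n • b) 0
          = ((r:ℂ)^n) • ((((r:ℂ)*μ) • g n ((r:ℂ)⁻¹ • (a+b)) + ((r:ℂ)*μ) • g n ((r:ℂ)⁻¹ • (a-b))
              - (2:ℂ) • g n (μ • a) : 𝒜) : H →L[ℂ] K) := by
        simp only [jensenDefect, cube0, hf0, ZeroMemClass.coe_zero, comp_zero, zero_comp,
          map_zero, sub_zero, e1, e2, e3, hgdef]
        push_cast
        match_scalars <;> field_simp <;> ring
      rw [hdef, hns] at h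
      rw [norm_pow, hnormR] at h
      have hφn' : φ ((r:ℂ)^n • a) ((r:ℂ)^n • b) 0 ≤ (r*L)^n * φ a b 0 := by
        have := hφn n a b 0; simpa using this
      have hrn : (0:ℝ) < r^n := pow_pos hr0 n
      rw [Submodule.coe_norm]
      have h' := h.trans hφn'
      rw [mul_pow] at h'
      have h'' : r^n * ‖((((r:ℂ)*μ) • g n ((r:ℂ)⁻¹ • (a+b)) + ((r:ℂ)*μ) • g n ((r:ℂ)⁻¹ • (a-b))
          - (2:ℂ) • g n (μ • a) : 𝒜) : H →L[ℂ] K)‖ ≤ r^n * (L^n * φ a b 0) := by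
        rw [← mul_assoc]; exact h'
      have h3 := le_of_mul_le_mul_left h'' hrn
      rw [mul_comm (φ a b 0)]
      exact h3
    have h1 : Tendsto (fun n => ((r:ℂ)*μ) • g n ((r:ℂ)⁻¹ • (a+b)) + ((r:ℂ)*μ) • g n ((r:ℂ)⁻¹ • (a-b))
        - (2:ℂ) • g n (μ • a)) atTop
        (𝓝 (((r:ℂ)*μ) • D ((r:ℂ)⁻¹ • (a+b)) + ((r:ℂ)*μ) • D ((r:ℂ)⁻¹ • (a-b))
          - (2:ℂ) • D (μ • a))) :=
      (((hD _).const_smul _).add ((hD _).const_smul _)).sub ((hD _).const_smul _)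
    have h2 : Tendsto (fun n => ((r:ℂ)*μ) • g n ((r:ℂ)⁻¹ • (a+b)) + ((r:ℂ)*μ) • g n ((r:ℂ)⁻¹ • (a-b))
        - (2:ℂ) • g n (μ • a)) atTop (𝓝 0) := by
      apply squeeze_zero_norm key
      simpa using (tendsto_pow_atTop_nhds_zero_of_lt_one hL0 hL1).const_mul (φ a b 0)
    exact tendsto_nhds_unique h1 h2
  -- consequences: additivity and homogeneity
  have hJ : ∀ a b : 𝒜, (r:ℂ) • D ((r:ℂ)⁻¹ • (a+b)) + (r:ℂ) • D ((r:ℂ)⁻¹ • (a-b))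
      = (2:ℂ) • D a := by
    intro a b
    have h := hP3 1 (by simp) a b
    rw [sub_eq_zero] at h
    simpa [mul_one, one_smul] using h
  have hkey : ∀ u v : 𝒜, (r:ℂ) • D u + (r:ℂ) • D v = (2:ℂ) • D (((r:ℂ)/2) • (u+v)) := by
    intro u v
    have h := hJ (((r:ℂ)/2) • (u+v)) (((r:ℂ)/2) • (u-v))
    have e1 : (r:ℂ)⁻¹ • ((((r:ℂ)/2) • (u+v)) + (((r:ℂ)/2) • (u-v))) = u := by
      match_scalars <;> field_simp <;> ring
    have e2 : (r:ℂ)⁻¹ • ((((r:ℂ)/2) • (u+v)) - (((r:ℂ)/2) • (u-v))) = v := by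
      match_scalars <;> field_simp <;> ring
    rw [e1, e2] at h
    exact h
  have hDr : ∀ u : 𝒜, D ((r:ℂ) • u) = (r:ℂ) • D u := by
    intro u
    have h := hkey u u
    have e : ((r:ℂ)/2) • (u+u) = (r:ℂ) • u := by match_scalars; ring
    rw [e] at h
    have h2 : (2:ℂ) • D ((r:ℂ) • u) = (2:ℂ) • ((r:ℂ) • D u) := by
      rw [← h]; module
    exact smul_right_injective _ htwo h2
  have hhalf : ∀ u : 𝒜, (2:ℂ) • D (((r:ℂ)/2) • u) = (r:ℂ) • D u := by
    intro u
    have h := hkey u 0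
    rw [hD0] at h
    simpa using h.symm
  have hadd : ∀ u v : 𝒜, D (u+v) = D u + D v := by
    intro u v
    have h := hkey u v
    rw [hhalf (u+v)] at h
    have h2 : (r:ℂ) • D (u+v) = (r:ℂ) • (D u + D v) := by rw [← h]; module
    exact smul_right_injective _ hR0 h2
  have hTD : ∀ μ : ℂ, ‖μ‖ = 1 → ∀ a : 𝒜, D (μ • a) = μ • D a := by
    intro μ hμ a
    have h := hP3 μ hμ a 0
    rw [add_zero, sub_zero, sub_eq_zero] at h
    have hra : (r:ℂ) • D ((r:ℂ)⁻¹ • a) = D a := by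
      have h2 := hDr ((r:ℂ)⁻¹ • a)
      rw [smul_inv_smul₀ hR0] at h2
      exact h2.symm
    have h3 : (2:ℂ) • D (μ • a) = (2:ℂ) • (μ • D a) := by
      rw [← h, ← hra]; module
    exact smul_right_injective _ htwo h3
  have hD2 : ∀ y : 𝒜, D ((2:ℂ) • y) = (2:ℂ) • D y := by
    intro y
    rw [two_smul, hadd, ← two_smul ℂ]
  have h2n : ∀ (n : ℕ) (x : 𝒜), D ((2:ℂ)^n • x) = (2:ℂ)^n • D x := by
    intro n
    induction n with
    | zero => intro x; simp
    | succ n ih =>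
      intro x
      have e : (2:ℂ)^(n+1) • x = (2:ℂ) • ((2:ℂ)^n • x) := by
        rw [smul_smul]; congr 1; ring
      rw [e, hD2, ih, smul_smul]
      congr 1; ring
  have hsmall : ∀ z : ℂ, ‖z‖ ≤ 1 → ∀ x : 𝒜, D (z • x) = z • D x := by
    intro z hz x
    rcases eq_or_ne z 0 with rfl | hz0
    · simpa using hD0
    · have hz' : (0:ℝ) < ‖z‖ := norm_pos_iff.mpr hz0
      have hzC : ((‖z‖ : ℝ) : ℂ) ≠ 0 := by
        exact_mod_cast hz'.ne'
      set t : ℝ := Real.sqrt (1 - ‖z‖^2) with ht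
      have ht2 : t^2 = 1 - ‖z‖^2 := Real.sq_sqrt (by nlinarith)
      set μ₁ : ℂ := ((‖z‖:ℂ) + (t:ℂ) * Complex.I) * ((‖z‖:ℂ)⁻¹ * z) with hμ₁def
      set μ₂ : ℂ := ((‖z‖:ℂ) - (t:ℂ) * Complex.I) * ((‖z‖:ℂ)⁻¹ * z) with hμ₂def
      have hw : ‖(‖z‖:ℂ) + (t:ℂ) * Complex.I‖ = 1 := by
        rw [Complex.norm_add_mul_I, ht2]
        simp
      have hw' : ‖(‖z‖:ℂ) - (t:ℂ) * Complex.I‖ = 1 := by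
        have : (‖z‖:ℂ) - (t:ℂ) * Complex.I = (‖z‖:ℂ) + (-t:ℝ) * Complex.I := by
          push_cast; ring
        rw [this, Complex.norm_add_mul_I, neg_pow, ht2]
        simp
      have hrest : ‖(‖z‖:ℂ)⁻¹ * z‖ = 1 := by
        rw [norm_mul, norm_inv, Complex.norm_real, Real.norm_eq_abs, abs_of_pos hz']
        exact inv_mul_cancel₀ hz'.ne'
      have hμ₁ : ‖μ₁‖ = 1 := by rw [hμ₁def, norm_mul, hw, hrest]; ring
      have hμ₂ : ‖μ₂‖ = 1 := by rw [hμ₂def, norm_mul, hw', hrest]; ring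
      have hsum : μ₁ + μ₂ = 2 * z := by
        rw [hμ₁def, hμ₂def, ← add_mul]
        have e : ((‖z‖:ℂ) + (t:ℂ) * Complex.I) + ((‖z‖:ℂ) - (t:ℂ) * Complex.I)
            = 2 * (‖z‖:ℂ) := by ring
        rw [e]
        calc 2 * (‖z‖:ℂ) * ((‖z‖:ℂ)⁻¹ * z) = 2 * ((‖z‖:ℂ) * (‖z‖:ℂ)⁻¹) * z := by ring
          _ = 2 * z := by rw [mul_inv_cancel₀ hzC]; ring
      have hxx : (2:ℂ) • (z • x) = μ₁ • x + μ₂ • x := by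
        rw [smul_smul, ← add_smul, hsum]
      have hchain : (2:ℂ) • D (z • x) = (2:ℂ) • (z • D x) := by
        calc (2:ℂ) • D (z • x) = D ((2:ℂ) • (z • x)) := (hD2 _).symm
          _ = D (μ₁ • x + μ₂ • x) := by rw [hxx]
          _ = D (μ₁ • x) + D (μ₂ • x) := hadd _ _
          _ = μ₁ • D x + μ₂ • D x := by rw [hTD μ₁ hμ₁, hTD μ₂ hμ₂]
          _ = (μ₁ + μ₂) • D x := (add_smul _ _ _).symm
          _ = (2 * z) • D x := by rw [hsum]
          _ = (2:ℂ) • (z • D x) := by rw [mul_smul]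
      exact smul_right_injective _ htwo hchain
  have hCsmul : ∀ (z : ℂ) (x : 𝒜), D (z • x) = z • D x := by
    intro z x
    rcases le_or_gt ‖z‖ 1 with h | h
    · exact hsmall z h x
    · obtain ⟨n, hn⟩ := pow_unbounded_of_one_lt ‖z‖ (one_lt_two : (1:ℝ) < 2)
      have h2C : ((2:ℂ)^n) ≠ 0 := pow_ne_zero n htwo
      have hzd : ‖z / (2:ℂ)^n‖ ≤ 1 := by
        rw [norm_div, norm_pow]
        have : ‖(2:ℂ)‖ = 2 := by norm_num
        rw [this, div_le_one (by positivity)]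
        exact hn.le
      have hdecomp : z • x = (2:ℂ)^n • ((z / (2:ℂ)^n) • x) := by
        rw [smul_smul]
        congr 1
        field_simp
      rw [hdecomp, h2n, hsmall _ hzd, smul_smul]
      congr 1
      field_simp
  -- the derivation identity
  have hcube : ∀ c : 𝒜, (D (cube 𝒜 hA c) : H →L[ℂ] K) =
      ((D c : H →L[ℂ] K) ∘L adjoint (c : H →L[ℂ] K)) ∘L (c : H →L[ℂ] K) +
      ((c : H →L[ℂ] K) ∘L adjoint (D c : H →L[ℂ] K)) ∘L (c : H →L[ℂ] K) +
      ((c : H →L[ℂ] K) ∘L adjoint (c : H →L[ℂ] K)) ∘L (D c : H →L[ℂ] K) := by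
    intro c
    have key : ∀ n : ℕ, ‖(g (3*n) (cube 𝒜 hA c) : H →L[ℂ] K)
        - ((g n c : H →L[ℂ] K) ∘L adjoint (c : H →L[ℂ] K)) ∘L (c : H →L[ℂ] K)
        - ((c : H →L[ℂ] K) ∘L adjoint (g n c : H →L[ℂ] K)) ∘L (c : H →L[ℂ] K)
        - ((c : H →L[ℂ] K) ∘L adjoint (c : H →L[ℂ] K)) ∘L (g n c : H →L[ℂ] K)‖
        ≤ φ 0 0 c * L^n := by
      intro n
      have h := hineq 1 (by simp) 0 0 ((r:ℂ)^n • c)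
      have hdef : jensenDefect 𝒜 hA r f 1 0 0 ((r:ℂ)^n • c)
          = ((r:ℂ)^(3*n)) • ((g (3*n) (cube 𝒜 hA c) : H →L[ℂ] K)
            - ((g n c : H →L[ℂ] K) ∘L adjoint (c : H →L[ℂ] K)) ∘L (c : H →L[ℂ] K)
            - ((c : H →L[ℂ] K) ∘L adjoint (g n c : H →L[ℂ] K)) ∘L (c : H →L[ℂ] K)
            - ((c : H →L[ℂ] K) ∘L adjoint (c : H →L[ℂ] K)) ∘L (g n c : H →L[ℂ] K)) := by
        simp only [jensenDefect, add_zero, sub_zero, smul_zero, hf0, mul_one, one_smul,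
          ZeroMemClass.coe_zero, cube_smul, hgdef]
        push_cast
        rw [hadj_smul ((r:ℂ)^n), hadj_smul (((r:ℂ)^n)⁻¹), hconj_pow, hconj_pow_inv]
        simp only [smul_comp, comp_smul, smul_sub, smul_smul]
        match_scalars <;> field_simp <;> ring
      rw [hdef, hns, norm_pow, hnormR] at h
      have hφn' : φ 0 0 ((r:ℂ)^n • c) ≤ (r*L)^n * φ 0 0 c := by
        have := hφn n 0 0 c; simpa using this
      have h' := h.trans hφn'
      have hr3 : (0:ℝ) < r^(3*n) := pow_pos hr0 _
      have hmono : (r*L)^n ≤ r^(3*n) * L^n := by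
        rw [mul_pow]
        have h1 : r^n ≤ r^(3*n) := pow_le_pow_right₀ hr.le (by omega)
        exact mul_le_mul_of_nonneg_right h1 (pow_nonneg hL0 n)
      have h'' : r^(3*n) * ‖(g (3*n) (cube 𝒜 hA c) : H →L[ℂ] K)
          - ((g n c : H →L[ℂ] K) ∘L adjoint (c : H →L[ℂ] K)) ∘L (c : H →L[ℂ] K)
          - ((c : H →L[ℂ] K) ∘L adjoint (g n c : H →L[ℂ] K)) ∘L (c : H →L[ℂ] K)
          - ((c : H →L[ℂ] K) ∘L adjoint (c : H →L[ℂ] K)) ∘L (g n c : H →L[ℂ] K)‖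
          ≤ r^(3*n) * (L^n * φ 0 0 c) := by
        refine h'.trans ?_
        have := mul_le_mul_of_nonneg_right hmono (hφ0 0 0 c)
        calc (r*L)^n * φ 0 0 c ≤ r^(3*n) * L^n * φ 0 0 c := this
          _ = r^(3*n) * (L^n * φ 0 0 c) := by ring
      have h3 := le_of_mul_le_mul_left h'' hr3
      rw [mul_comm (φ 0 0 c)]
      exact h3
    have hadjcont : Continuous (fun x : H →L[ℂ] K => adjoint x) :=
      (adjoint : (H →L[ℂ] K) ≃ₗᵢ⋆[ℂ] (K →L[ℂ] H)).continuous
    have t1 : Tendsto (fun n => (g (3*n) (cube 𝒜 hA c) : H →L[ℂ] K)) atTop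
        (𝓝 (D (cube 𝒜 hA c) : H →L[ℂ] K)) := by
      refine (hDcoe (cube 𝒜 hA c)).comp ?_
      exact tendsto_atTop_mono (fun n => by simp only [id_eq]; omega) tendsto_id
    have t2 : Tendsto (fun n => ((g n c : H →L[ℂ] K) ∘L adjoint (c : H →L[ℂ] K)) ∘L (c : H →L[ℂ] K))
        atTop (𝓝 (((D c : H →L[ℂ] K) ∘L adjoint (c : H →L[ℂ] K)) ∘L (c : H →L[ℂ] K))) := by
      have hcont : Continuous (fun x : H →L[ℂ] K => (x ∘L adjoint (c : H →L[ℂ] K)) ∘L (c : H →L[ℂ] K)) :=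
        (continuous_id.clm_comp continuous_const).clm_comp continuous_const
      exact (hcont.tendsto _).comp (hDcoe c)
    have t3 : Tendsto (fun n => ((c : H →L[ℂ] K) ∘L adjoint (g n c : H →L[ℂ] K)) ∘L (c : H →L[ℂ] K))
        atTop (𝓝 (((c : H →L[ℂ] K) ∘L adjoint (D c : H →L[ℂ] K)) ∘L (c : H →L[ℂ] K))) := by
      have hcont : Continuous (fun x : H →L[ℂ] K => ((c : H →L[ℂ] K) ∘L adjoint x) ∘L (c : H →L[ℂ] K)) :=
        (continuous_const.clm_comp hadjcont).clm_comp continuous_const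
      exact (hcont.tendsto _).comp (hDcoe c)
    have t4 : Tendsto (fun n => ((c : H →L[ℂ] K) ∘L adjoint (c : H →L[ℂ] K)) ∘L (g n c : H →L[ℂ] K))
        atTop (𝓝 (((c : H →L[ℂ] K) ∘L adjoint (c : H →L[ℂ] K)) ∘L (D c : H →L[ℂ] K))) := by
      have hcont : Continuous (fun x : H →L[ℂ] K => ((c : H →L[ℂ] K) ∘L adjoint (c : H →L[ℂ] K)) ∘L x) :=
        continuous_const.clm_comp continuous_id
      exact (hcont.tendsto _).comp (hDcoe c)
    have hw : Tendsto (fun n => (g (3*n) (cube 𝒜 hA c) : H →L[ℂ] K)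
        - ((g n c : H →L[ℂ] K) ∘L adjoint (c : H →L[ℂ] K)) ∘L (c : H →L[ℂ] K)
        - ((c : H →L[ℂ] K) ∘L adjoint (g n c : H →L[ℂ] K)) ∘L (c : H →L[ℂ] K)
        - ((c : H →L[ℂ] K) ∘L adjoint (c : H →L[ℂ] K)) ∘L (g n c : H →L[ℂ] K)) atTop
        (𝓝 ((D (cube 𝒜 hA c) : H →L[ℂ] K)
          - ((D c : H →L[ℂ] K) ∘L adjoint (c : H →L[ℂ] K)) ∘L (c : H →L[ℂ] K)
          - ((c : H →L[ℂ] K) ∘L adjoint (D c : H →L[ℂ] K)) ∘L (c : H →L[ℂ] K)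
          - ((c : H →L[ℂ] K) ∘L adjoint (c : H →L[ℂ] K)) ∘L (D c : H →L[ℂ] K))) :=
      ((t1.sub t2).sub t3).sub t4
    have hz : Tendsto (fun n => (g (3*n) (cube 𝒜 hA c) : H →L[ℂ] K)
        - ((g n c : H →L[ℂ] K) ∘L adjoint (c : H →L[ℂ] K)) ∘L (c : H →L[ℂ] K)
        - ((c : H →L[ℂ] K) ∘L adjoint (g n c : H →L[ℂ] K)) ∘L (c : H →L[ℂ] K)
        - ((c : H →L[ℂ] K) ∘L adjoint (c : H →L[ℂ] K)) ∘L (g n c : H →L[ℂ] K)) atTop (𝓝 0) := by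
      apply squeeze_zero_norm key
      simpa using (tendsto_pow_atTop_nhds_zero_of_lt_one hL0 hL1).const_mul (φ 0 0 c)
    have h0 := tendsto_nhds_unique hw hz
    have h1 : (D (cube 𝒜 hA c) : H →L[ℂ] K)
        - (((D c : H →L[ℂ] K) ∘L adjoint (c : H →L[ℂ] K)) ∘L (c : H →L[ℂ] K)
          + ((c : H →L[ℂ] K) ∘L adjoint (D c : H →L[ℂ] K)) ∘L (c : H →L[ℂ] K)
          + ((c : H →L[ℂ] K) ∘L adjoint (c : H →L[ℂ] K)) ∘L (D c : H →L[ℂ] K)) = 0 := by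
      rw [← h0]; abel
    exact sub_eq_zero.mp h1
  -- assemble
  refine ⟨D, ⟨⟨hadd, hCsmul, hcube⟩, hbound⟩, ?_⟩
  rintro D' ⟨⟨hadd', hsmul', -⟩, hb'⟩
  funext a
  have hLL : (0:ℝ) ≤ L/(1-L) := div_nonneg hL0 hL1'.le
  have key : ∀ n : ℕ, ‖D' a - D a‖ ≤ (2 * (L/(1-L)) * φ a 0 0) * L^n := by
    intro n
    have hrn : (0:ℝ) < r^n := pow_pos hr0 n
    have e : D' a - D a = ((r:ℂ)^n)⁻¹ • (D' ((r:ℂ)^n • a) - D ((r:ℂ)^n • a)) := by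
      rw [hsmul', hCsmul]
      match_scalars <;> field_simp
    rw [e, hnsA, norm_inv, norm_pow, hnormR]
    have hsplit : D' ((r:ℂ)^n • a) - D ((r:ℂ)^n • a)
        = (f ((r:ℂ)^n • a) - D ((r:ℂ)^n • a)) - (f ((r:ℂ)^n • a) - D' ((r:ℂ)^n • a)) := by abel
    have h1 : ‖D' ((r:ℂ)^n • a) - D ((r:ℂ)^n • a)‖
        ≤ 2 * (L/(1-L)) * φ ((r:ℂ)^n • a) 0 0 := by
      rw [hsplit]
      refine (norm_sub_le _ _).trans ?_
      have hb1 := hbound ((r:ℂ)^n • a)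
      have hb2 := hb' ((r:ℂ)^n • a)
      refine (add_le_add hb1 hb2).trans (le_of_eq (by ring))
    have h2 : φ ((r:ℂ)^n • a) 0 0 ≤ (r*L)^n * φ a 0 0 := by simpa using hφn n a 0 0
    have h3 : ‖D' ((r:ℂ)^n • a) - D ((r:ℂ)^n • a)‖
        ≤ 2 * (L/(1-L)) * ((r*L)^n * φ a 0 0) := by
      refine h1.trans ?_
      exact mul_le_mul_of_nonneg_left h2 (mul_nonneg (by norm_num) hLL)
    calc (r^n)⁻¹ * ‖D' ((r:ℂ)^n • a) - D ((r:ℂ)^n • a)‖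
        ≤ (r^n)⁻¹ * (2 * (L/(1-L)) * ((r*L)^n * φ a 0 0)) :=
          mul_le_mul_of_nonneg_left h3 (inv_nonneg.mpr hrn.le)
      _ = (r^n)⁻¹ * (r^n * ((2 * (L/(1-L)) * φ a 0 0) * L^n)) := by rw [mul_pow]; ring
      _ = (2 * (L/(1-L)) * φ a 0 0) * L^n := inv_mul_cancel_left₀ hrn.ne' _
  have hlim : Tendsto (fun n : ℕ => (2 * (L/(1-L)) * φ a 0 0) * L^n) atTop (𝓝 (0:ℝ)) := by
    simpa using (tendsto_pow_atTop_nhds_zero_of_lt_one hL0 hL1).const_mul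
      (2 * (L/(1-L)) * φ a 0 0)
  have h0 : ‖D' a - D a‖ ≤ 0 := ge_of_tendsto' hlim key
  have hfin := norm_le_zero_iff.mp h0
  exact sub_eq_zero.mp hfin
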